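/- Let G : ℝ × ℝ → ℝ be twice continuously differentiable in a neighbourhood of (x*, p*), with G(x*, p*) = 0 and ∂G/∂x (x*, p*) = 0. Assume ∂G/∂p (x*, p*) ≠ 0 and ∂²G/∂x² (x*, p*) > 0, and ∂G/∂p (x*, p*) < 0. Then there exist ε > 0 and δ > 0 such that for every p with p* < p < p* + δ, the two solutions x₁ < x₂ of G(x, p) = 0 in (x* − ε, x* + ε) are hyperbolic with ∂G/∂x (x₁, p) < 0 and ∂G/∂x (x₂, p) > 0; that is, the lower branch of stationary points of ẋ = G(x, p) is stable and the upper branch is unstable. -/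

import Mathlib

/-- Saddle-node bifurcation theorem, stability of the branches (case
`G_xx > 0`, `G_p < 0`): for `p` slightly above `ps`, the two stationary points
`x₁ < x₂` near `xs` are hyperbolic, the lower one stable and the upper one
unstable. -/
theorem saddle_node_branch_stability
    (G : ℝ × ℝ → ℝ) (xs ps : ℝ)
    (hG : ContDiffAt ℝ 2 G (xs, ps))
    (h0 : G (xs, ps) = 0)
    (hGx : deriv (fun x => G (x, ps)) xs = 0)
    (hGp : deriv (fun p => G (xs, p)) ps ≠ 0)
    (hGxx : deriv (deriv (fun x => G (x, ps))) xs > 0)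
    (hGp' : deriv (fun p => G (xs, p)) ps < 0) :
    ∃ ε > (0:ℝ), ∃ δ > (0:ℝ), ∀ p : ℝ, ps < p → p < ps + δ →
      ∀ x₁ x₂ : ℝ, x₁ ∈ Set.Ioo (xs - ε) (xs + ε) → x₂ ∈ Set.Ioo (xs - ε) (xs + ε) →
        G (x₁, p) = 0 → G (x₂, p) = 0 → x₁ < x₂ →
        deriv (fun x => G (x, p)) x₁ < 0 ∧ deriv (fun x => G (x, p)) x₂ > 0 := by
  classical
  -- Get an open set U on which G is C².
  obtain ⟨u, hu, hGu⟩ := hG.contDiffOn le_rfl (by simp)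
  obtain ⟨U, hUu, hUopen, hq0U⟩ := mem_nhds_iff.mp hu
  have hGU : ContDiffOn ℝ 2 G U := hGu.mono hUu
  -- F = ∂G/∂x, H = ∂²G/∂x².
  set F : ℝ × ℝ → ℝ := fun q => fderiv ℝ G q (1, 0) with hF
  set H : ℝ × ℝ → ℝ := fun q => fderiv ℝ F q (1, 0) with hH
  have hFU : ContDiffOn ℝ 1 F U := by
    exact (ContinuousLinearMap.apply ℝ ℝ ((1:ℝ), (0:ℝ))).contDiff.comp_contDiffOn
      (hGU.fderiv_of_isOpen hUopen (by norm_num))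
  have hHcont : ContinuousOn H U := by
    exact ((ContinuousLinearMap.apply ℝ ℝ ((1:ℝ), (0:ℝ))).continuous.comp_continuousOn
      (hFU.continuousOn_fderiv_of_isOpen hUopen le_rfl))
  -- slice derivatives
  have hslope : ∀ x p : ℝ, (x, p) ∈ U → HasDerivAt (fun y => G (y, p)) (F (x, p)) x := by
    intro x p hq
    have hdiff : DifferentiableAt ℝ G (x, p) :=
      ((hGU.differentiableOn two_ne_zero).differentiableAt (hUopen.mem_nhds hq))
    have hι : HasDerivAt (fun y : ℝ => (y, p)) ((1:ℝ), (0:ℝ)) x :=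
      HasDerivAt.prodMk (hasDerivAt_id x) (hasDerivAt_const x p)
    exact hdiff.hasFDerivAt.comp_hasDerivAt x hι
  have hslopeF : ∀ x p : ℝ, (x, p) ∈ U → HasDerivAt (fun y => F (y, p)) (H (x, p)) x := by
    intro x p hq
    have hdiff : DifferentiableAt ℝ F (x, p) :=
      ((hFU.differentiableOn one_ne_zero).differentiableAt (hUopen.mem_nhds hq))
    have hι : HasDerivAt (fun y : ℝ => (y, p)) ((1:ℝ), (0:ℝ)) x :=
      HasDerivAt.prodMk (hasDerivAt_id x) (hasDerivAt_const x p)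
    exact hdiff.hasFDerivAt.comp_hasDerivAt x hι
  -- H (xs, ps) > 0
  have hnhds : ∀ᶠ x in nhds xs, (x, ps) ∈ U := by
    have : ContinuousAt (fun x : ℝ => (x, ps)) xs := by fun_prop
    exact this (hUopen.mem_nhds hq0U)
  have hderiv_eq : (deriv (fun x => G (x, ps))) =ᶠ[nhds xs] fun x => F (x, ps) := by
    filter_upwards [hnhds] with x hx
    exact (hslope x ps hx).deriv
  have hHpos0 : 0 < H (xs, ps) := by
    have h1 : deriv (deriv (fun x => G (x, ps))) xs = deriv (fun x => F (x, ps)) xs :=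
      hderiv_eq.deriv_eq
    have h2 : deriv (fun x => F (x, ps)) xs = H (xs, ps) := (hslopeF xs ps hq0U).deriv
    rw [h1, h2] at hGxx
    exact hGxx
  -- find a ball on which H > 0
  have hHat : ContinuousAt H (xs, ps) := hHcont.continuousAt (hUopen.mem_nhds hq0U)
  have hmem : {q : ℝ × ℝ | 0 < H q} ∩ U ∈ nhds (xs, ps) := by
    refine Filter.inter_mem ?_ (hUopen.mem_nhds hq0U)
    exact hHat (isOpen_Ioi.mem_nhds hHpos0)
  obtain ⟨r, hr, hball⟩ := Metric.mem_nhds_iff.mp hmem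
  refine ⟨r, hr, r, hr, ?_⟩
  intro p hp1 hp2 x₁ x₂ hx₁ hx₂ hz₁ hz₂ hlt
  -- membership of the rectangle in the ball
  have hrect : ∀ x ∈ Set.Icc x₁ x₂, (x, p) ∈ Metric.ball ((xs, ps) : ℝ × ℝ) r := by
    intro x hx
    have hx' : x ∈ Set.Ioo (xs - r) (xs + r) :=
      ⟨lt_of_lt_of_le hx₁.1 hx.1, lt_of_le_of_lt hx.2 hx₂.2⟩
    have h1 : |x - xs| < r := abs_lt.mpr ⟨by linarith [hx'.1], by linarith [hx'.2]⟩
    have h2 : |p - ps| < r := abs_lt.mpr ⟨by linarith, by linarith⟩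
    have : dist ((x, p) : ℝ × ℝ) (xs, ps) = max (dist x xs) (dist p ps) := Prod.dist_eq
    rw [Metric.mem_ball, this, Real.dist_eq, Real.dist_eq]
    exact max_lt h1 h2
  have hrectU : ∀ x ∈ Set.Icc x₁ x₂, (x, p) ∈ U ∧ 0 < H (x, p) := by
    intro x hx
    have := hball (hrect x hx)
    exact ⟨this.2, this.1⟩
  -- F (·, p) is strictly monotone on [x₁, x₂]
  have hFmono : StrictMonoOn (fun x => F (x, p)) (Set.Icc x₁ x₂) := by
    refine strictMonoOn_of_deriv_pos (convex_Icc x₁ x₂) ?_ ?_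
    · intro x hx
      exact ((hslopeF x p (hrectU x hx).1).continuousAt).continuousWithinAt
    · intro x hx
      rw [interior_Icc] at hx
      have hx' : x ∈ Set.Icc x₁ x₂ := Set.mem_Icc_of_Ioo hx
      rw [(hslopeF x p (hrectU x hx').1).deriv]
      exact (hrectU x hx').2
  have hd₁ : deriv (fun x => G (x, p)) x₁ = F (x₁, p) :=
    (hslope x₁ p (hrectU x₁ (Set.left_mem_Icc.mpr hlt.le)).1).deriv
  have hd₂ : deriv (fun x => G (x, p)) x₂ = F (x₂, p) :=
    (hslope x₂ p (hrectU x₂ (Set.right_mem_Icc.mpr hlt.le)).1).deriv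
  constructor
  · rw [hd₁]
    by_contra hcon
    push_neg at hcon
    -- F (x₁, p) ≥ 0, so F (·,p) > 0 on (x₁, x₂], hence G (·,p) strictly increasing
    have hGmono : StrictMonoOn (fun x => G (x, p)) (Set.Icc x₁ x₂) := by
      refine strictMonoOn_of_deriv_pos (convex_Icc x₁ x₂) ?_ ?_
      · intro x hx
        exact ((hslope x p (hrectU x hx).1).continuousAt).continuousWithinAt
      · intro x hx
        rw [interior_Icc] at hx
        have hx' : x ∈ Set.Icc x₁ x₂ := Set.mem_Icc_of_Ioo hx
        rw [(hslope x p (hrectU x hx').1).deriv]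
        have : F (x₁, p) < F (x, p) :=
          hFmono (Set.left_mem_Icc.mpr hlt.le) hx' hx.1
        linarith
    have := hGmono (Set.left_mem_Icc.mpr hlt.le) (Set.right_mem_Icc.mpr hlt.le) hlt
    simp only [hz₁, hz₂] at this
    exact lt_irrefl 0 this
  · rw [hd₂]
    by_contra hcon
    push_neg at hcon
    -- F (x₂, p) ≤ 0, so F (·,p) < 0 on [x₁, x₂), hence G (·,p) strictly decreasing
    have hGanti : StrictAntiOn (fun x => G (x, p)) (Set.Icc x₁ x₂) := by
      refine strictAntiOn_of_deriv_neg (convex_Icc x₁ x₂) ?_ ?_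
      · intro x hx
        exact ((hslope x p (hrectU x hx).1).continuousAt).continuousWithinAt
      · intro x hx
        rw [interior_Icc] at hx
        have hx' : x ∈ Set.Icc x₁ x₂ := Set.mem_Icc_of_Ioo hx
        rw [(hslope x p (hrectU x hx').1).deriv]
        have : F (x, p) < F (x₂, p) :=
          hFmono hx' (Set.right_mem_Icc.mpr hlt.le) hx.2
        linarith
    have := hGanti (Set.left_mem_Icc.mpr hlt.le) (Set.right_mem_Icc.mpr hlt.le) hlt
    simp only [hz₁, hz₂] at this
    exact lt_irrefl 0 this
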